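/- The set {2^n : n ∈ ℕ} ∪ {2^n + 2n − 1 : n ∈ ℕ} is an I₀ set. -/

import Mathlib

/-- A sequence `ψ : ℕ → ℂ` is almost periodic if it is a uniform limit of
trigonometric polynomials. -/
def AlmostPeriodic (ψ : ℕ → ℂ) : Prop :=
  ∀ ε : ℝ, 0 < ε → ∃ (m : ℕ) (c : Fin m → ℂ) (α : Fin m → ℝ),
    ∀ n : ℕ, ‖ψ n - ∑ j, c j * Complex.exp (2 * (Real.pi : ℂ) * Complex.I * (n : ℂ) * (α j : ℂ))‖ < ε

/-- A set `E ⊆ ℕ` is an `I₀` set if every bounded function on `E` extends to an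
almost periodic sequence on `ℕ`. -/
def IsI0Set (E : Set ℕ) : Prop :=
  ∀ b : ℕ → ℂ, (∃ C : ℝ, ∀ n ∈ E, ‖b n‖ ≤ C) →
    ∃ ψ : ℕ → ℂ, AlmostPeriodic ψ ∧ ∀ r ∈ E, ψ r = b r


noncomputable section
namespace I0Aux
open Complex

/-- `ec x = e^{2π i x}`. -/
def ec (x : ℝ) : ℂ := Complex.exp (2 * (Real.pi : ℂ) * Complex.I * (x : ℂ))

lemma ec_eq (n : ℕ) (α : ℝ) :
    ec ((n : ℝ) * α) = Complex.exp (2 * (Real.pi : ℂ) * Complex.I * (n : ℂ) * (α : ℂ)) := by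
  rw [ec]; push_cast; ring_nf

def IsTP (f : ℕ → ℂ) : Prop :=
  ∃ (m : ℕ) (c : Fin m → ℂ) (α : Fin m → ℝ),
    ∀ n : ℕ, f n = ∑ j, c j * ec ((n : ℝ) * α j)

lemma norm_ec (x : ℝ) : ‖ec x‖ = 1 := by
  rw [ec, Complex.norm_exp]
  norm_num [Complex.mul_re]

lemma ec_int (z : ℤ) : ec z = 1 := by
  rw [ec]
  rw [show 2 * (Real.pi : ℂ) * Complex.I * ((z:ℝ) : ℂ) = (z : ℂ) * (2 * (Real.pi:ℂ) * Complex.I) by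
    push_cast; ring]
  exact Complex.exp_int_mul_two_pi_mul_I z

lemma ec_zero : ec 0 = 1 := by
  rw [show (0:ℝ) = ((0:ℤ):ℝ) by norm_num, ec_int]

lemma ec_add (x y : ℝ) : ec (x + y) = ec x * ec y := by
  rw [ec, ec, ec, ← Complex.exp_add]
  congr 1
  push_cast
  ring

lemma IsTP.ofFinset {ι : Type*} (f : ℕ → ℂ) (s : Finset ι) (c : ι → ℂ) (α : ι → ℝ)
    (h : ∀ n : ℕ, f n = ∑ j ∈ s, c j * ec ((n : ℝ) * α j)) : IsTP f := by
  classical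
  refine ⟨s.card, fun k => c (s.equivFin.symm k), fun k => α (s.equivFin.symm k), fun n => ?_⟩
  rw [h n, ← s.sum_attach (fun j => c j * ec ((n:ℝ) * α j))]
  exact (Equiv.sum_comp s.equivFin.symm (fun j => c j.1 * ec ((n:ℝ) * α j.1))).symm

lemma IsTP.char (α : ℝ) : IsTP (fun n => ec ((n : ℝ) * α)) :=
  IsTP.ofFinset _ {0} (fun _ : ℕ => 1) (fun _ => α) (by simp)

lemma IsTP.const (c : ℂ) : IsTP (fun _ => c) := by
  refine IsTP.ofFinset _ {0} (fun _ : ℕ => c) (fun _ => 0) fun n => ?_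
  simp [ec_zero]

lemma IsTP.add {f g : ℕ → ℂ} (hf : IsTP f) (hg : IsTP g) : IsTP (fun n => f n + g n) := by
  classical
  obtain ⟨m₁, c₁, α₁, h₁⟩ := hf
  obtain ⟨m₂, c₂, α₂, h₂⟩ := hg
  refine IsTP.ofFinset _ (Finset.univ : Finset (Fin m₁ ⊕ Fin m₂))
    (Sum.elim c₁ c₂) (Sum.elim α₁ α₂) fun n => ?_
  rw [Fintype.sum_sum_type, h₁, h₂]
  simp

lemma IsTP.mul {f g : ℕ → ℂ} (hf : IsTP f) (hg : IsTP g) : IsTP (fun n => f n * g n) := by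
  classical
  obtain ⟨m₁, c₁, α₁, h₁⟩ := hf
  obtain ⟨m₂, c₂, α₂, h₂⟩ := hg
  refine IsTP.ofFinset _ (Finset.univ : Finset (Fin m₁ × Fin m₂))
    (fun p => c₁ p.1 * c₂ p.2) (fun p => α₁ p.1 + α₂ p.2) fun n => ?_
  rw [h₁ n, h₂ n, Finset.sum_mul_sum, Fintype.sum_prod_type]
  refine Finset.sum_congr rfl fun j _ => Finset.sum_congr rfl fun k _ => ?_
  rw [mul_add, ec_add]
  ring

lemma IsTP.sum {ι : Type*} (s : Finset ι) (f : ι → ℕ → ℂ) (h : ∀ i ∈ s, IsTP (f i)) :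
    IsTP (fun n => ∑ i ∈ s, f i n) := by
  classical
  induction s using Finset.cons_induction with
  | empty => simpa using IsTP.const 0
  | cons a s' ha ih =>
      rw [show (fun n => ∑ i ∈ Finset.cons a s' ha, f i n)
          = fun n => f a n + ∑ i ∈ s', f i n by
        funext n; rw [Finset.sum_cons]]
      exact (h a (Finset.mem_cons_self a s')).add
        (ih fun i hi => h i (Finset.mem_cons_of_mem hi))

/-- Exact indicator of the residue class of `r` mod `q`. -/
def Ind (q r : ℕ) : ℕ → ℂ := fun m => if m % q = r % q then 1 else 0

lemma ec_nat_mul (n : ℕ) (x : ℝ) : ec ((n : ℝ) * x) = ec x ^ n := by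
  rw [ec, ec, ← Complex.exp_nat_mul]
  congr 1
  push_cast
  ring

lemma Ind_isTP {q : ℕ} (hq : 0 < q) (r : ℕ) : IsTP (Ind q r) := by
  classical
  refine IsTP.ofFinset _ (Finset.range q)
    (fun j => (1/(q:ℂ)) * ec (-((r:ℝ) * j / q))) (fun j => (j:ℝ)/q) fun m => ?_
  have hq0 : (q:ℝ) ≠ 0 := by positivity
  set d : ℝ := ((m:ℝ) - (r:ℝ))/q with hd
  have hterm : ∀ j ∈ Finset.range q,
      (1/(q:ℂ)) * ec (-((r:ℝ) * j / q)) * ec ((m:ℝ) * ((j:ℝ)/q)) = (1/(q:ℂ)) * ec d ^ j := by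
    intro j _
    have key : -((r:ℝ) * j / q) + (m:ℝ) * ((j:ℝ)/q) = (j:ℝ) * d := by
      rw [hd]; field_simp; ring
    rw [mul_assoc, ← ec_add, key, ec_nat_mul]
  rw [Finset.sum_congr rfl hterm, ← Finset.mul_sum]
  have hzq : ec d ^ q = 1 := by
    rw [← ec_nat_mul]
    have : (q:ℝ) * d = (((m:ℤ) - (r:ℤ) : ℤ) : ℝ) := by
      rw [hd]; push_cast; field_simp
    rw [this, ec_int]
  by_cases h : m % q = r % q
  · obtain ⟨k, hk⟩ := (Nat.modEq_iff_dvd.mp (h : m ≡ r [MOD q]))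
    have hmr : (m:ℝ) - r = (q:ℝ) * ((-k : ℤ) : ℝ) := by
      have := congrArg (Int.cast : ℤ → ℝ) hk
      push_cast at this ⊢
      linarith
    have hdk : d = ((-k : ℤ) : ℝ) := by
      rw [hd, hmr, mul_div_cancel_left₀ _ hq0]
    rw [Ind, if_pos h, hdk, ec_int]
    simp only [one_pow, Finset.sum_const, Finset.card_range, nsmul_eq_mul, mul_one]
    rw [one_div, inv_mul_cancel₀ (show (q:ℂ) ≠ 0 by exact_mod_cast hq0)]
  · have hz1 : ec d ≠ 1 := by
      intro hcon
      obtain ⟨n, hn⟩ := Complex.exp_eq_one_iff.mp (by rwa [ec] at hcon)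
      have h2 : (2 * (Real.pi:ℂ) * Complex.I) ≠ 0 := by
        simp [Real.pi_ne_zero, Complex.I_ne_zero]
      have hdn : (d:ℂ) = (n:ℂ) := by
        rw [show ((n:ℂ) * (2 * (Real.pi:ℂ) * Complex.I)) = (2 * (Real.pi:ℂ) * Complex.I) * n by ring] at hn
        exact mul_left_cancel₀ h2 hn
      have hdr : d = (n:ℝ) := by exact_mod_cast hdn
      have hmrq : (m:ℝ) - (r:ℝ) = (n:ℝ) * q := by
        rw [hd] at hdr
        field_simp at hdr
        linarith
      have hint : (m:ℤ) - (r:ℤ) = n * q := by exact_mod_cast hmrq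
      exact h (Nat.modEq_iff_dvd.mpr ⟨-n, by linarith⟩)
    rw [geom_sum_eq hz1, hzq, Ind, if_neg h]
    simp

section Kron

variable (lam : ℕ → ℕ) (θ : ℕ → ℝ)

private def gstep (j : ℕ) (x : ℝ) : ℝ := ((⌈(lam j : ℝ) * x - θ j⌉ : ℤ) + θ j)/(lam j)

private def aseq : ℕ → ℝ := fun j => Nat.rec (gstep lam θ 0 0) (fun i x => gstep lam θ (i+1) x) j

lemma kron (hpos : ∀ j, 1 ≤ lam j) (hrat : ∀ j, 33 * lam j ≤ lam (j+1)) :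
    ∃ α : ℝ, ∀ j, ∃ z : ℤ, |(lam j : ℝ) * α - θ j - z| ≤ 1/32 := by
  have hlr : ∀ j, (1:ℝ) ≤ lam j := fun j => by exact_mod_cast hpos j
  have hl0 : ∀ j, (0:ℝ) < lam j := fun j => lt_of_lt_of_le one_pos (hlr j)
  have hne : ∀ j, (lam j : ℝ) ≠ 0 := fun j => ne_of_gt (hl0 j)
  have hgz : ∀ j x, (lam j : ℝ) * gstep lam θ j x - θ j = (⌈(lam j : ℝ) * x - θ j⌉ : ℤ) := by
    intro j x
    rw [gstep, ← mul_div_assoc, mul_comm, mul_div_assoc, div_self (hne j), mul_one]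
    ring
  have hgl : ∀ j x, x ≤ gstep lam θ j x := by
    intro j x
    rw [gstep, le_div_iff₀ (hl0 j)]
    have := Int.le_ceil ((lam j : ℝ) * x - θ j)
    linarith [mul_comm x ((lam j : ℝ))]
  have hgu : ∀ j x, gstep lam θ j x ≤ x + 1/(lam j) := by
    intro j x
    rw [gstep, div_le_iff₀ (hl0 j)]
    have h1 := Int.ceil_lt_add_one ((lam j : ℝ) * x - θ j)
    have hexp : (x + 1/(lam j : ℝ)) * lam j = (lam j : ℝ) * x + 1 := by
      rw [add_mul, one_div, inv_mul_cancel₀ (hne j), mul_comm]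
    rw [hexp]
    linarith
  set a : ℕ → ℝ := aseq lam θ with ha
  have hsucc : ∀ j, a (j+1) = gstep lam θ (j+1) (a j) := fun j => rfl
  have hstepl : ∀ j, a j ≤ a (j+1) := fun j => by rw [hsucc]; exact hgl (j+1) (a j)
  have hstepu : ∀ j, a (j+1) ≤ a j + 1/(lam (j+1)) := fun j => by
    rw [hsucc]; exact hgu (j+1) (a j)
  have hmono : ∀ j t, a j ≤ a (j+t) := by
    intro j t
    induction t with
    | zero => exact le_refl _
    | succ t ih => exact le_trans ih (by rw [← Nat.add_assoc]; exact hstepl (j+t))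
  have hclaim : ∀ j t, a (j+t) ≤ a j + 1/(32*lam j) - 1/(32*lam (j+t)) := by
    intro j t
    induction t with
    | zero => norm_num
    | succ t ih =>
        have hA : (0:ℝ) < lam (j+t) := hl0 _
        have hB : (0:ℝ) < lam (j+t+1) := hl0 _
        have hAB : (33:ℝ) * lam (j+t) ≤ lam (j+t+1) := by exact_mod_cast hrat (j+t)
        have key : 1/(lam (j+t+1) : ℝ) + 1/(32*lam (j+t+1)) ≤ 1/(32*lam (j+t)) := by
          rw [div_add_div _ _ (by positivity) (by positivity),
            div_le_div_iff₀ (by positivity) (by positivity)]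
          nlinarith
        have h1 := hstepu (j+t)
        rw [← Nat.add_assoc] at *
        linarith
  have hbdd : BddAbove (Set.range a) := by
    refine ⟨a 0 + 1/(32*lam 0), ?_⟩
    rintro x ⟨t, rfl⟩
    have h1 := hclaim 0 t
    simp only [Nat.zero_add] at h1
    have h2 : (0:ℝ) < 1/(32*lam t) := by
      have := hl0 t
      positivity
    linarith
  set α := sSup (Set.range a) with hα
  refine ⟨α, fun j => ?_⟩
  have hle : a j ≤ α := le_csSup hbdd ⟨j, rfl⟩
  have hge : α ≤ a j + 1/(32*lam j) := by
    refine csSup_le ⟨a 0, ⟨0, rfl⟩⟩ ?_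
    rintro x ⟨i, rfl⟩
    rcases Nat.le_total i j with h | h
    · obtain ⟨t, rfl⟩ := Nat.exists_eq_add_of_le h
      have h2 : (0:ℝ) < 1/(32*lam (i+t)) := by
        have := hl0 (i+t)
        positivity
      have := hmono i t
      linarith
    · obtain ⟨t, rfl⟩ := Nat.exists_eq_add_of_le h
      have h2 : (0:ℝ) < 1/(32*lam (j+t)) := by
        have := hl0 (j+t)
        positivity
      have := hclaim j t
      linarith
  have hz : ∃ z : ℤ, (lam j : ℝ) * a j - θ j = (z : ℝ) := by
    cases j with
    | zero => exact ⟨⌈(lam 0 : ℝ) * 0 - θ 0⌉, hgz 0 0⟩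
    | succ i => exact ⟨⌈(lam (i+1) : ℝ) * a i - θ (i+1)⌉, by rw [hsucc]; exact hgz (i+1) (a i)⟩
  obtain ⟨z, hzz⟩ := hz
  have h3 : (lam j : ℝ) * (1/(32*lam j)) = 1/32 := by
    rw [mul_one_div, mul_comm (32:ℝ), ← div_div, div_self (hne j)]
  refine ⟨z, abs_le.mpr ⟨?_, ?_⟩⟩
  · have h4 : (lam j : ℝ) * a j ≤ (lam j : ℝ) * α :=
      mul_le_mul_of_nonneg_left hle (le_of_lt (hl0 j))
    linarith
  · have h1 : (lam j : ℝ) * α ≤ (lam j : ℝ) * (a j + 1/(32*lam j)) :=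
      mul_le_mul_of_nonneg_left hge (le_of_lt (hl0 j))
    rw [mul_add, h3] at h1
    linarith

end Kron

lemma ec_dist {x y : ℝ} {z : ℤ} (h : |x - y - z| ≤ 1/32) : ‖ec x - ec y‖ ≤ 1/2 := by
  have e1 : ec (x - y - z) * ec y = ec (x - (z:ℝ)) := by
    rw [← ec_add]
    congr 1
    ring
  have e2 : ec (x - (z:ℝ)) = ec x := by
    rw [show x - (z:ℝ) = x + ((-z : ℤ):ℝ) by push_cast; ring, ec_add, ec_int, mul_one]
  have hxy : ec x - ec y = ec y * (ec (x - y - z) - 1) := by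
    rw [mul_sub, mul_one, mul_comm, e1, e2]
  rw [hxy, norm_mul, norm_ec, one_mul]
  have habs : ‖(2 * (Real.pi:ℂ) * Complex.I * ((x - y - z : ℝ) : ℂ))‖ =
      2 * Real.pi * |x - y - z| := by
    simp only [norm_mul, Complex.norm_I, Complex.norm_real, Real.norm_eq_abs, mul_one]
    rw [abs_of_pos Real.pi_pos]
    norm_num
  have hle1 : ‖(2 * (Real.pi:ℂ) * Complex.I * ((x - y - z : ℝ) : ℂ))‖ ≤ 1 := by
    rw [habs]
    have := Real.pi_le_four
    nlinarith [Real.pi_pos]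
  have := Complex.norm_exp_sub_one_le hle1
  rw [habs] at this
  have hπ : 2 * Real.pi * |x - y - z| ≤ 2 * Real.pi * (1/32) := by
    have := Real.pi_pos
    nlinarith
  have h4 := Real.pi_le_four
  calc ‖ec (x - y - z) - 1‖ = ‖(Complex.exp (2 * (Real.pi:ℂ) * Complex.I * ((x - y - z:ℝ):ℂ)) - 1)‖ := by
        rw [ec]
    _ ≤ 2 * (2 * Real.pi * |x - y - z|) := this
    _ ≤ 1/2 := by nlinarith [Real.pi_pos]

lemma circle_surj {w : ℂ} (hw : ‖w‖ = 1) : ∃ θ : ℝ, ec θ = w := by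
  refine ⟨w.arg / (2 * Real.pi), ?_⟩
  rw [ec]
  have h2π : (2 * (Real.pi:ℂ)) ≠ 0 := by
    simp [Real.pi_ne_zero]
  have : 2 * (Real.pi:ℂ) * Complex.I * ((w.arg / (2 * Real.pi) : ℝ) : ℂ) = (w.arg : ℂ) * Complex.I := by
    push_cast
    field_simp
  rw [this]
  have := Complex.norm_mul_exp_arg_mul_I w
  rw [hw] at this
  simpa using this

lemma split_two {z : ℂ} (hz : ‖z‖ ≤ 1) : ∃ θ₁ θ₂ : ℝ, z = (ec θ₁ + ec θ₂)/2 := by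
  by_cases h0 : z = 0
  · refine ⟨0, 1/2, ?_⟩
    have h1 : ec 0 = 1 := ec_zero
    have h2 : ec (1/2) = -1 := by
      rw [ec, show (2 * (Real.pi:ℂ) * Complex.I * (((1:ℝ)/2 : ℝ) : ℂ)) = (Real.pi:ℂ) * Complex.I by
        push_cast; ring]
      exact Complex.exp_pi_mul_I
    rw [h0, h1, h2]
    norm_num
  · set t : ℝ := ‖z‖ with ht
    have ht0 : 0 < t := norm_pos_iff.mpr h0
    have htne : (t:ℂ) ≠ 0 := by exact_mod_cast ne_of_gt ht0
    set u : ℂ := z / t with hu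
    have hut : (t:ℂ) * u = z := by
      rw [hu, mul_div_cancel₀ _ htne]
    have hnu : ‖u‖ = 1 := by
      rw [hu, norm_div, Complex.norm_real, Real.norm_eq_abs, abs_of_pos ht0,
        div_self (ne_of_gt ht0)]
    set d : ℝ := Real.sqrt (1 - t^2) with hd
    have hd2 : d^2 = 1 - t^2 := Real.sq_sqrt (by nlinarith)
    have hw : ∀ s : ℝ, s^2 = d^2 → ‖((t:ℂ) + s * Complex.I) * u‖ = 1 := by
      intro s hs
      rw [norm_mul, hnu, mul_one, Complex.norm_def]
      have : Complex.normSq ((t:ℂ) + s * Complex.I) = t^2 + s^2 := by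
        rw [show ((t:ℂ) + s * Complex.I) = Complex.mk t s by
          rw [Complex.mk_eq_add_mul_I]]
        rw [Complex.normSq_mk]
        ring
      rw [this, hs, hd2]
      norm_num
    obtain ⟨θ₁, hθ₁⟩ := circle_surj (hw d rfl)
    obtain ⟨θ₂, hθ₂⟩ := circle_surj (hw (-d) (by ring))
    refine ⟨θ₁, θ₂, ?_⟩
    rw [hθ₁, hθ₂, ← hut]
    push_cast
    ring

/-- values of the indicator -/
lemma Ind_eq_one {q r m : ℕ} (h : m % q = r % q) : Ind q r m = 1 := if_pos h
lemma Ind_eq_zero {q r m : ℕ} (h : m % q ≠ r % q) : Ind q r m = 0 := if_neg h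
lemma norm_Ind_le (q r m : ℕ) : ‖Ind q r m‖ ≤ 1 := by
  rw [Ind]
  split <;> norm_num

/-- collapse of an indicator sum at a point in one of the classes -/
lemma sum_collapse {N q : ℕ} (t : ℕ → ℕ) (g : ℕ → ℂ) (m : ℕ) {i₀ : ℕ} (hi₀ : i₀ ∈ Finset.range N)
    (hmi : m % q = t i₀ % q)
    (hinj : ∀ i ∈ Finset.range N, ∀ j ∈ Finset.range N, t i % q = t j % q → i = j) :
    ∑ i ∈ Finset.range N, Ind q (t i) m * g i = g i₀ := by
  rw [Finset.sum_eq_single_of_mem i₀ hi₀]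
  · rw [Ind_eq_one hmi, one_mul]
  · intro j hj hne
    rw [Ind_eq_zero, zero_mul]
    intro hc
    exact hne (hinj j hj i₀ hi₀ (by rw [← hc, hmi]))

lemma norm_sum_ind_le {N q : ℕ} (t : ℕ → ℕ) (g : ℕ → ℂ) (m : ℕ)
    (hinj : ∀ i ∈ Finset.range N, ∀ j ∈ Finset.range N, t i % q = t j % q → i = j)
    (hg : ∀ i, ‖g i‖ ≤ 1) :
    ‖∑ i ∈ Finset.range N, Ind q (t i) m * g i‖ ≤ 1 := by
  by_cases h : ∃ i ∈ Finset.range N, m % q = t i % q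
  · obtain ⟨i₀, hi₀, hmi⟩ := h
    rw [sum_collapse t g m hi₀ hmi hinj]
    exact hg i₀
  · push_neg at h
    rw [Finset.sum_eq_zero fun j hj => by rw [Ind_eq_zero (h j hj), zero_mul]]
    norm_num

/-- the second family -/
def bfun (n : ℕ) : ℕ := 2^n + 2*n - 1

lemma bfun_pos {n : ℕ} (hn : 0 < n) : 1 ≤ bfun n := by
  have h : 0 < 2^n := Nat.two_pow_pos n
  rw [bfun]
  generalize hA : (2:ℕ)^n = A at h ⊢
  omega

lemma bfun_odd {n : ℕ} (hn : 0 < n) : bfun n % 2 = 1 := by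
  obtain ⟨k, hk⟩ := dvd_pow_self 2 hn.ne'
  rw [bfun, hk]
  omega

lemma pow_mod_127 (n : ℕ) : 2^n % 127 = 2^(n % 7) % 127 := by
  conv_lhs => rw [show n = 7 * (n / 7) + n % 7 by omega]
  rw [pow_add, pow_mul]
  have h1 : (2^7)^(n / 7) ≡ 1^(n/7) [MOD 127] := Nat.ModEq.pow _ (by decide)
  have h2 := h1.mul_right (2^(n % 7))
  simp only [one_pow, one_mul] at h2
  exact h2

lemma gapB {n n' : ℕ} (hn : 0 < n) (hlt : n < n') (hc : bfun n % 256 = bfun n' % 256) :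
    n + 7 ≤ n' := by
  by_contra hcon
  push_neg at hcon
  rcases Nat.lt_or_ge n 8 with h8 | h8
  · -- n < 8, n' ≤ n + 6 ≤ 13 : finite check
    interval_cases n <;> interval_cases n' <;> simp_all [bfun]
  · -- n ≥ 8 : both powers divisible by 256
    have hd1 : 2^8 ∣ 2^n := pow_dvd_pow 2 h8
    have hd2 : 2^8 ∣ 2^n' := pow_dvd_pow 2 (by omega)
    obtain ⟨k, hk⟩ := hd1
    obtain ⟨k', hk'⟩ := hd2
    rw [show (2:ℕ)^8 = 256 by norm_num] at hk hk'
    have hp1 : 0 < 2^n := Nat.two_pow_pos n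
    have hp2 : 0 < 2^n' := Nat.two_pow_pos n'
    rw [hk] at hp1
    rw [hk'] at hp2
    rw [bfun, bfun, hk, hk'] at hc
    omega

lemma ratioB {n n' : ℕ} (hn : 0 < n) (h7 : n + 7 ≤ n') : 33 * bfun n ≤ bfun n' := by
  have hlt : n < 2^n := n.lt_two_pow_self
  have hlt' : n' < 2^n' := n'.lt_two_pow_self
  have h2 : 128 * 2^n ≤ 2^n' := by
    calc 128 * 2^n = 2^(n+7) := by rw [pow_add]; ring
      _ ≤ 2^n' := Nat.pow_le_pow_right (by norm_num) h7
  rw [bfun, bfun]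
  generalize hA : (2:ℕ)^n = A at *
  generalize hB : (2:ℕ)^n' = B at *
  omega

lemma classB_infinite {ρ n₀ : ℕ} (hn₀ : 0 < n₀) (hρ : bfun n₀ % 256 = ρ) :
    {n : ℕ | 0 < n ∧ bfun n % 256 = ρ}.Infinite := by
  have hρodd : ρ % 2 = 1 := by
    rw [← hρ, Nat.mod_mod_of_dvd _ (by norm_num : (2:ℕ) ∣ 256)]
    exact bfun_odd hn₀
  have hρlt : ρ < 256 := hρ ▸ Nat.mod_lt _ (by norm_num)
  refine Set.infinite_of_injective_forall_mem
    (f := fun t : ℕ => (ρ+1)/2 + 128*(t+1)) ?_ ?_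
  · intro a b hab
    simp only at hab
    omega
  · intro t
    set n := (ρ+1)/2 + 128*(t+1) with hnd
    have hn8 : 8 ≤ n := by omega
    have hd : 2^8 ∣ 2^n := pow_dvd_pow 2 hn8
    obtain ⟨k, hk⟩ := hd
    constructor
    · omega
    · rw [bfun, hk]
      have h1 : 1 ≤ 2^n := Nat.one_le_two_pow
      omega

lemma avg_dist {A B C D : ℂ} (h1 : ‖A - C‖ ≤ 1/2) (h2 : ‖B - D‖ ≤ 1/2) :
    ‖(A+B)/2 - (C+D)/2‖ ≤ 1/2 := by
  have h : (A+B)/2 - (C+D)/2 = ((A-C) + (B-D))/2 := by ring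
  rw [h, norm_div]
  have : ‖(2:ℂ)‖ = 2 := by norm_num
  rw [this]
  have := norm_add_le (A-C) (B-D)
  linarith

lemma classA (th : ℕ → ℝ) (r : ℕ) :
    ∃ α : ℝ, ∀ n : ℕ, 0 < n → n % 7 = r →
      ‖ec (((2^n : ℕ) : ℝ) * α) - ec (th (2^n))‖ ≤ 1/2 := by
  obtain ⟨α, hα⟩ := kron (fun j => 2^(7*j + r)) (fun j => th (2^(7*j + r)))
    (fun j => Nat.one_le_two_pow)
    (fun j => by
      show 33 * 2^(7*j + r) ≤ 2^(7*(j+1) + r)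
      have he : (2:ℕ)^(7*(j+1) + r) = 2^(7*j+r) * 128 := by
        rw [show 7*(j+1) + r = (7*j+r) + 7 by omega, pow_add]
        norm_num
      rw [he]
      have := Nat.two_pow_pos (7*j+r)
      nlinarith)
  refine ⟨α, fun n hn hr => ?_⟩
  obtain ⟨z, hz⟩ := hα (n / 7)
  have he : 7 * (n / 7) + r = n := by omega
  rw [he] at hz
  exact ec_dist hz

lemma classB (th : ℕ → ℝ) (ρ : ℕ) :
    ∃ β : ℝ, ∀ n : ℕ, 0 < n → bfun n % 256 = ρ →
      ‖ec ((bfun n : ℝ) * β) - ec (th (bfun n))‖ ≤ 1/2 := by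
  classical
  set p : ℕ → Prop := fun n => 0 < n ∧ bfun n % 256 = ρ with hp
  by_cases hinf : {n | p n}.Infinite
  · obtain ⟨β, hβ⟩ := kron (fun j => bfun (Nat.nth p j)) (fun j => th (bfun (Nat.nth p j)))
      (fun j => bfun_pos (Nat.nth_mem_of_infinite hinf j).1)
      (fun j => by
        have h1 : Nat.nth p j < Nat.nth p (j+1) :=
          (Nat.nth_lt_nth hinf).mpr (Nat.lt_succ_self j)
        have hm1 := Nat.nth_mem_of_infinite hinf j
        have hm2 := Nat.nth_mem_of_infinite hinf (j+1)
        have hg : Nat.nth p j + 7 ≤ Nat.nth p (j+1) :=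
          gapB hm1.1 h1 (hm1.2.trans hm2.2.symm)
        exact ratioB hm1.1 hg)
    refine ⟨β, fun n hn hb => ?_⟩
    have hpn : p n := ⟨hn, hb⟩
    have hnth : Nat.nth p (Nat.count p n) = n := Nat.nth_count hpn
    obtain ⟨z, hz⟩ := hβ (Nat.count p n)
    rw [hnth] at hz
    exact ec_dist hz
  · have hempty : ∀ n, ¬ p n := fun n hpn => hinf (classB_infinite hpn.1 hpn.2)
    exact ⟨0, fun n hn hb => absurd ⟨hn, hb⟩ (hempty n)⟩

lemma IsTP.congr {f g : ℕ → ℂ} (h : IsTP f) (he : ∀ n, g n = f n) : IsTP g := by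
  obtain ⟨m, c, α, hf⟩ := h
  exact ⟨m, c, α, fun n => (he n).trans (hf n)⟩

lemma isTP_avg (α β : ℝ) : IsTP (fun m => (ec ((m:ℝ)*α) + ec ((m:ℝ)*β))/2) := by
  refine (((IsTP.char α).add (IsTP.char β)).mul (IsTP.const (2⁻¹:ℂ))).congr fun n => ?_
  rw [div_eq_mul_inv]

lemma norm_avg_le (x y : ℝ) : ‖(ec x + ec y)/2‖ ≤ 1 := by
  rw [norm_div]
  have h2 : ‖(2:ℂ)‖ = 2 := by norm_num
  rw [h2]
  have := norm_add_le (ec x) (ec y)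
  rw [norm_ec, norm_ec] at this
  linarith

def Eset : Set ℕ :=
  {m : ℕ | ∃ n : ℕ, 0 < n ∧ m = 2 ^ n} ∪ {m : ℕ | ∃ n : ℕ, 0 < n ∧ m = 2 ^ n + 2 * n - 1}

lemma onestep (v : ℕ → ℂ) :
    ∃ P : ℕ → ℂ, IsTP P ∧ (∀ m, ‖P m‖ ≤ 1) ∧
      ((∀ m ∈ Eset, ‖v m‖ ≤ 1) → ∀ m ∈ Eset, ‖v m - P m‖ ≤ 1/2) := by
  classical
  set w : ℕ → ℂ := fun m => if ‖v m‖ ≤ 1 then v m else 0 with hw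
  have hwle : ∀ m, ‖w m‖ ≤ 1 := by
    intro m
    rw [hw]
    dsimp only
    split
    · assumption
    · simp
  have hsplit : ∀ m, ∃ θ : ℝ × ℝ, w m = (ec θ.1 + ec θ.2)/2 := by
    intro m
    obtain ⟨θ₁, θ₂, he⟩ := split_two (hwle m)
    exact ⟨⟨θ₁, θ₂⟩, he⟩
  choose th hth using hsplit
  choose A1 hA1 using fun r => classA (fun m => (th m).1) r
  choose A2 hA2 using fun r => classA (fun m => (th m).2) r
  choose B1 hB1 using fun ρ => classB (fun m => (th m).1) ρ
  choose B2 hB2 using fun ρ => classB (fun m => (th m).2) ρ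
  set gA : ℕ → ℕ → ℂ := fun r m => (ec ((m:ℝ) * A1 r) + ec ((m:ℝ) * A2 r))/2 with hgA
  set gB : ℕ → ℕ → ℂ := fun ρ m => (ec ((m:ℝ) * B1 ρ) + ec ((m:ℝ) * B2 ρ))/2 with hgB
  set ΦA : ℕ → ℂ := fun m => ∑ r ∈ Finset.range 7, Ind 127 (2^r) m * gA r m with hΦA
  set ΦB : ℕ → ℂ := fun m => ∑ ρ ∈ Finset.range 256, Ind 256 ρ m * gB ρ m with hΦB
  set P : ℕ → ℂ := fun m => Ind 2 0 m * ΦA m + Ind 2 1 m * ΦB m with hP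
  have hinjA : ∀ i ∈ Finset.range 7, ∀ j ∈ Finset.range 7, 2^i % 127 = 2^j % 127 → i = j := by
    decide
  have hinjB : ∀ i ∈ Finset.range 256, ∀ j ∈ Finset.range 256, i % 256 = j % 256 → i = j := by
    intro i hi j hj h
    simp only [Finset.mem_range] at hi hj
    omega
  refine ⟨P, ?_, ?_, ?_⟩
  · -- trig poly
    have h1 : IsTP ΦA := by
      rw [hΦA]
      exact IsTP.sum _ _ fun r _ => (Ind_isTP (by norm_num) _).mul (isTP_avg _ _)
    have h2 : IsTP ΦB := by
      rw [hΦB]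
      exact IsTP.sum _ _ fun ρ _ => (Ind_isTP (by norm_num) _).mul (isTP_avg _ _)
    rw [hP]
    exact (((Ind_isTP (by norm_num) 0).mul h1).add ((Ind_isTP (by norm_num) 1).mul h2))
  · -- bound
    intro m
    have hbA : ‖ΦA m‖ ≤ 1 :=
      norm_sum_ind_le _ _ m hinjA fun r => norm_avg_le _ _
    have hbB : ‖ΦB m‖ ≤ 1 :=
      norm_sum_ind_le (fun ρ => ρ) _ m hinjB fun ρ => norm_avg_le _ _
    rcases Nat.mod_two_eq_zero_or_one m with hm | hm
    · have e0 : Ind 2 0 m = 1 := Ind_eq_one (by omega)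
      have e1 : Ind 2 1 m = 0 := Ind_eq_zero (by omega)
      rw [hP]
      simp only [e0, e1, one_mul, zero_mul, add_zero]
      exact hbA
    · have e0 : Ind 2 0 m = 0 := Ind_eq_zero (by omega)
      have e1 : Ind 2 1 m = 1 := Ind_eq_one (by omega)
      rw [hP]
      simp only [e0, e1, one_mul, zero_mul, zero_add]
      exact hbB
  · -- interpolation error
    intro hv m hm
    have hwm : w m = v m := by
      rw [hw]
      exact if_pos (hv m hm)
    rcases hm with ⟨n, hn, rfl⟩ | ⟨n, hn, rfl⟩
    · -- m = 2^n
      have hmod2 : (2^n) % 2 = 0 := by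
        obtain ⟨k, hk⟩ := dvd_pow_self 2 hn.ne'
        omega
      have e0 : Ind 2 0 (2^n) = 1 := Ind_eq_one (by omega)
      have e1 : Ind 2 1 (2^n) = 0 := Ind_eq_zero (by omega)
      have hcol : ΦA (2^n) = gA (n % 7) (2^n) := by
        rw [hΦA]
        exact sum_collapse (fun r => 2^r) (fun r => gA r (2^n)) (2^n)
          (Finset.mem_range.mpr (Nat.mod_lt n (by norm_num))) (pow_mod_127 n) hinjA
      have hPm : P (2^n) = gA (n % 7) (2^n) := by
        rw [hP]
        simp only [e0, e1, one_mul, zero_mul, add_zero]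
        exact hcol
      have d1 := hA1 (n % 7) n hn rfl
      have d2 := hA2 (n % 7) n hn rfl
      rw [norm_sub_rev] at d1 d2
      rw [hPm, ← hwm, hth (2^n), hgA]
      exact avg_dist d1 d2
    · -- m = 2^n + 2n - 1 = bfun n
      have hbm : (2^n + 2*n - 1) = bfun n := rfl
      rw [hbm] at hwm ⊢
      have hmod2 : bfun n % 2 = 1 := bfun_odd hn
      have e0 : Ind 2 0 (bfun n) = 0 := Ind_eq_zero (by omega)
      have e1 : Ind 2 1 (bfun n) = 1 := Ind_eq_one (by omega)
      have hρlt : bfun n % 256 < 256 := Nat.mod_lt _ (by norm_num)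
      have hcol : ΦB (bfun n) = gB (bfun n % 256) (bfun n) := by
        rw [hΦB]
        exact sum_collapse (fun ρ => ρ) (fun ρ => gB ρ (bfun n)) (bfun n)
          (Finset.mem_range.mpr hρlt) (by omega) hinjB
      have hPm : P (bfun n) = gB (bfun n % 256) (bfun n) := by
        rw [hP]
        simp only [e0, e1, one_mul, zero_mul, zero_add]
        exact hcol
      have d1 := hB1 (bfun n % 256) n hn rfl
      have d2 := hB2 (bfun n % 256) n hn rfl
      rw [norm_sub_rev] at d1 d2
      rw [hPm, ← hwm, hth (bfun n), hgB]
      exact avg_dist d1 d2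

lemma interp (b : ℕ → ℂ) (hb : ∀ m ∈ Eset, ‖b m‖ ≤ 1) :
    ∃ ψ : ℕ → ℂ,
      (∀ ε : ℝ, 0 < ε → ∃ (mm : ℕ) (c : Fin mm → ℂ) (α : Fin mm → ℝ),
        ∀ n : ℕ, ‖ψ n - ∑ j, c j * ec ((n:ℝ) * α j)‖ < ε) ∧
      ∀ m ∈ Eset, ψ m = b m := by
  classical
  choose step hstep1 hstep2 hstep3 using onestep
  set v : ℕ → ℕ → ℂ := fun j => Nat.rec b (fun _ vj => fun m => 2*(vj m - step vj m)) j with hv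
  have hvsucc : ∀ j, v (j+1) = fun m => 2*(v j m - step (v j) m) := fun j => rfl
  have hbound : ∀ j, ∀ m ∈ Eset, ‖v j m‖ ≤ 1 := by
    intro j
    induction j with
    | zero => exact hb
    | succ j ih =>
        intro m hm
        rw [hvsucc j]
        have h1 := hstep3 (v j) ih m hm
        rw [norm_mul]
        have h2 : ‖(2:ℂ)‖ = 2 := by norm_num
        rw [h2]
        linarith
  have herr : ∀ j, ∀ m ∈ Eset, ‖v j m - step (v j) m‖ ≤ 1/2 :=
    fun j => hstep3 (v j) (hbound j)
  set S : ℕ → ℕ → ℂ := fun N m => ∑ j ∈ Finset.range N, (1/2:ℂ)^j * step (v j) m with hS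
  have hnormterm : ∀ j m, ‖(1/2:ℂ)^j * step (v j) m‖ ≤ (1/2:ℝ)^j := by
    intro j m
    rw [norm_mul, norm_pow]
    have h2 : ‖(1/2:ℂ)‖ = 1/2 := by norm_num
    rw [h2]
    calc ((1:ℝ)/2)^j * ‖step (v j) m‖ ≤ (1/2:ℝ)^j * 1 := by
          have := hstep2 (v j) m
          have hp : (0:ℝ) ≤ (1/2:ℝ)^j := by positivity
          nlinarith
      _ = (1/2:ℝ)^j := mul_one _
  have hgeo : Summable (fun j : ℕ => (1/2:ℝ)^j) :=
    summable_geometric_of_lt_one (by norm_num) (by norm_num)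
  have hsum : ∀ m, Summable (fun j => (1/2:ℂ)^j * step (v j) m) :=
    fun m => Summable.of_norm_bounded hgeo (fun j => hnormterm j m)
  set ψ : ℕ → ℂ := fun m => ∑' j, (1/2:ℂ)^j * step (v j) m with hψ
  have htail : ∀ N m, ‖ψ m - S N m‖ ≤ 2 * (1/2:ℝ)^N := by
    intro N m
    have hspl := (hsum m).sum_add_tsum_nat_add N
    have he : ψ m - S N m = ∑' j, (1/2:ℂ)^(j+N) * step (v (j+N)) m := by
      rw [hψ, hS]
      dsimp only
      rw [← hspl]
      ring
    rw [he]
    have hsum2 : Summable (fun j => (1/2:ℂ)^(j+N) * step (v (j+N)) m) :=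
      ((summable_nat_add_iff N).mpr (hsum m))
    calc ‖∑' j, (1/2:ℂ)^(j+N) * step (v (j+N)) m‖
        ≤ ∑' j, ‖(1/2:ℂ)^(j+N) * step (v (j+N)) m‖ := by
          apply norm_tsum_le_tsum_norm
          apply Summable.of_nonneg_of_le (fun j => norm_nonneg _)
            (fun j => hnormterm (j+N) m)
          exact (summable_nat_add_iff N).mpr hgeo
      _ ≤ ∑' j, (1/2:ℝ)^(j+N) := by
          apply Summable.tsum_le_tsum (fun j => hnormterm (j+N) m)
          · apply Summable.of_nonneg_of_le (fun j => norm_nonneg _)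
              (fun j => hnormterm (j+N) m)
            exact (summable_nat_add_iff N).mpr hgeo
          · exact (summable_nat_add_iff N).mpr hgeo
      _ = (1/2:ℝ)^N * ∑' j, (1/2:ℝ)^j := by
          rw [← tsum_mul_left]
          congr 1
          funext j
          rw [pow_add]
          ring
      _ = (1/2:ℝ)^N * 2 := by
          rw [tsum_geometric_of_lt_one (by norm_num) (by norm_num)]
          norm_num
      _ = 2 * (1/2:ℝ)^N := by ring
  have hkey : ∀ j m, v j m = (2:ℂ)^j * (b m - S j m) := by
    intro j
    induction j with
    | zero =>
        intro m
        show b m = (2:ℂ)^0 * (b m - ∑ j ∈ Finset.range 0, (1/2:ℂ)^j * step (v j) m)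
        simp
    | succ j ih =>
        intro m
        have h1 : (2:ℂ)^j * (1/2:ℂ)^j = 1 := by
          rw [← mul_pow]
          norm_num
        have hSs : S (j+1) m = S j m + (1/2:ℂ)^j * step (v j) m := by
          rw [hS]
          exact Finset.sum_range_succ _ j
        calc v (j+1) m = 2*(v j m - step (v j) m) := by rw [hvsucc j]
          _ = 2*((2:ℂ)^j * (b m - S j m) - step (v j) m) := by rw [ih]
          _ = (2:ℂ)^(j+1) * (b m - (S j m + (1/2:ℂ)^j * step (v j) m)) := by
              linear_combination (2 * step (v j) m) * h1
          _ = (2:ℂ)^(j+1) * (b m - S (j+1) m) := by rw [← hSs]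
  have hberr : ∀ j, ∀ m ∈ Eset, ‖b m - S j m‖ ≤ (1/2:ℝ)^j := by
    intro j m hm
    have h1 := hbound j m hm
    rw [hkey j m, norm_mul, norm_pow] at h1
    have h2 : ‖(2:ℂ)‖ = 2 := by norm_num
    rw [h2] at h1
    have h2j : (0:ℝ) < 2^j := by positivity
    rw [one_div_pow, le_div_iff₀ h2j, mul_comm]
    exact h1
  refine ⟨ψ, ?_, ?_⟩
  · -- almost periodic
    intro ε hε
    obtain ⟨N, hN⟩ := exists_pow_lt_of_lt_one (x := ε/2) (y := (1/2:ℝ)) (by positivity) (by norm_num)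
    have hTP : IsTP (S N) := by
      rw [hS]
      exact IsTP.sum _ _ fun j _ => (IsTP.const _).mul (hstep1 (v j))
    obtain ⟨mm, c, α, hrep⟩ := hTP
    refine ⟨mm, c, α, fun n => ?_⟩
    rw [← hrep n]
    calc ‖ψ n - S N n‖ ≤ 2 * (1/2:ℝ)^N := htail N n
      _ < ε := by linarith
  · -- interpolation
    intro m hm
    have hlim : ∀ j : ℕ, ‖ψ m - b m‖ ≤ 3 * (1/2:ℝ)^j := by
      intro j
      have h1 := htail j m
      have h2 := hberr j m hm
      calc ‖ψ m - b m‖ = ‖(ψ m - S j m) - (b m - S j m)‖ := by ring_nf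
        _ ≤ ‖ψ m - S j m‖ + ‖b m - S j m‖ := norm_sub_le _ _
        _ ≤ 3 * (1/2:ℝ)^j := by linarith
    have hzero : ‖ψ m - b m‖ ≤ 0 := by
      by_contra hcon
      push_neg at hcon
      obtain ⟨N, hN⟩ := exists_pow_lt_of_lt_one (x := ‖ψ m - b m‖/3) (y := (1/2:ℝ))
        (by positivity) (by norm_num)
      have := hlim N
      linarith
    have := norm_nonneg (ψ m - b m)
    have h0 : ‖ψ m - b m‖ = 0 := le_antisymm hzero this
    have := norm_eq_zero.mp h0
    exact sub_eq_zero.mp this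

end I0Aux


open I0Aux in
/-- The set `{2^n : n ∈ ℕ} ∪ {2^n + 2n - 1 : n ∈ ℕ}` is an `I₀` set. -/
theorem union_pow_two_is_I0 :
    IsI0Set ({m : ℕ | ∃ n : ℕ, 0 < n ∧ m = 2 ^ n} ∪
      {m : ℕ | ∃ n : ℕ, 0 < n ∧ m = 2 ^ n + 2 * n - 1}) := by
  intro b hCex
  obtain ⟨C, hC⟩ := hCex
  set C' : ℝ := max C 1 with hC'def
  have hC'1 : (1:ℝ) ≤ C' := le_max_right _ _
  have hC'0 : (0:ℝ) < C' := lt_of_lt_of_le one_pos hC'1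
  set b' : ℕ → ℂ := fun m => if ‖b m‖ ≤ C' then b m / (C':ℂ) else 0 with hb'def
  have hCn : ‖((C':ℝ):ℂ)‖ = C' := by
    rw [Complex.norm_real, Real.norm_eq_abs, abs_of_pos hC'0]
  have hb'le : ∀ m ∈ Eset, ‖b' m‖ ≤ 1 := by
    intro m hm
    have h1 : ‖b m‖ ≤ C' := le_trans (hC m hm) (le_max_left _ _)
    rw [hb'def]
    dsimp only
    rw [if_pos h1, norm_div, hCn, div_le_one hC'0]
    exact h1
  obtain ⟨ψ, hAP, hint⟩ := interp b' hb'le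
  refine ⟨fun m => (C':ℂ) * ψ m, ?_, ?_⟩
  · intro ε hε
    obtain ⟨mm, c, α, h⟩ := hAP (ε / C') (by positivity)
    refine ⟨mm, fun j => (C':ℂ) * c j, α, fun n => ?_⟩
    have hsum : ∑ j, ((C':ℂ) * c j) * Complex.exp (2 * (Real.pi:ℂ) * Complex.I * (n:ℂ) * (α j : ℂ))
        = (C':ℂ) * ∑ j, c j * Complex.exp (2 * (Real.pi:ℂ) * Complex.I * (n:ℂ) * (α j : ℂ)) := by
      rw [Finset.mul_sum]
      exact Finset.sum_congr rfl fun j _ => by ring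
    have hconv : ∑ j, c j * Complex.exp (2 * (Real.pi:ℂ) * Complex.I * (n:ℂ) * (α j:ℂ))
        = ∑ j, c j * ec ((n:ℝ) * α j) :=
      Finset.sum_congr rfl fun j _ => by rw [ec_eq]
    rw [hsum, ← mul_sub, norm_mul, hCn, hconv]
    calc C' * ‖ψ n - ∑ j, c j * ec ((n:ℝ) * α j)‖ < C' * (ε / C') :=
          mul_lt_mul_of_pos_left (h n) hC'0
      _ = ε := by field_simp
  · intro r hr
    have h1 : ‖b r‖ ≤ C' := le_trans (hC r hr) (le_max_left _ _)
    have h2 := hint r hr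
    dsimp only
    rw [h2, hb'def]
    dsimp only
    rw [if_pos h1, mul_div_cancel₀]
    exact_mod_cast ne_of_gt hC'0
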